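/- arXiv:1410.0868 — 4 statements merged into one kernel-verified Lean document; each statement's English description precedes it below -/
import Mathlib

section
/- Let f: ℝ → ℝ satisfy f(x) = f(|x|), be strictly concave on [0,∞), and subadditive on [0,∞). Then f is sparsifying: for nonnegative reals x₁, ..., xₙ, if ∑_i f(x_i) = f(∑_i x_i), then at most one x_i is nonzero. -/
lemma aux_sum_subadd {n : ℕ} (f : ℝ → ℝ)
    (hsub : ∀ a b : ℝ, 0 ≤ a → 0 ≤ b → f (a + b) ≤ f a + f b)
    (x : Fin n → ℝ) (hx : ∀ i, 0 ≤ x i) :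
    ∀ s : Finset (Fin n), s.Nonempty → f (∑ k ∈ s, x k) ≤ ∑ k ∈ s, f (x k) := by
  intro s
  induction s using Finset.cons_induction with
  | empty => intro h; simp at h
  | cons a s ha ih =>
    intro _
    rcases s.eq_empty_or_nonempty with rfl | hs
    · simp
    · rw [Finset.sum_cons, Finset.sum_cons]
      calc f (x a + ∑ k ∈ s, x k) ≤ f (x a) + f (∑ k ∈ s, x k) :=
            hsub _ _ (hx a) (Finset.sum_nonneg fun k _ => hx k)
        _ ≤ _ := by linarith [ih hs]

lemma aux_strict_superadd (f : ℝ → ℝ)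
    (hconc : StrictConcaveOn ℝ (Set.Ici (0 : ℝ)) f)
    (hsub : ∀ a b : ℝ, 0 ≤ a → 0 ≤ b → f (a + b) ≤ f a + f b)
    {a b : ℝ} (ha : 0 < a) (hb : 0 < b) : f (a + b) < f a + f b := by
  have hf0 : 0 ≤ f 0 := by
    have h00 := hsub 0 0 le_rfl le_rfl
    rw [add_zero] at h00; linarith
  set s := a + b with hs
  have hspos : 0 < s := by positivity
  have h0s : (0:ℝ) ≠ s := by positivity
  have h0mem : (0:ℝ) ∈ Set.Ici (0:ℝ) := Set.mem_Ici.2 le_rfl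
  have hsmem : s ∈ Set.Ici (0:ℝ) := le_of_lt hspos
  have h1 := hconc.2 h0mem hsmem h0s (show (0:ℝ) < b / s by positivity)
    (show (0:ℝ) < a / s by positivity) (show b / s + a / s = 1 by field_simp; try (rw [hs]; ring))
  have h2 := hconc.2 h0mem hsmem h0s (show (0:ℝ) < a / s by positivity)
    (show (0:ℝ) < b / s by positivity) (show a / s + b / s = 1 by field_simp; exact hs.symm)
  have e1 : (b / s) • (0:ℝ) + (a / s) • s = a := by
    simp [smul_eq_mul]; field_simp
  have e2 : (a / s) • (0:ℝ) + (b / s) • s = b := by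
    simp [smul_eq_mul]; field_simp
  rw [e1] at h1
  rw [e2] at h2
  simp only [smul_eq_mul] at h1 h2
  have hsum : b / s + a / s = 1 := by field_simp; try (rw [hs]; ring)
  have h3 := add_lt_add h1 h2
  have h4 : b / s * f 0 + a / s * f s + (a / s * f 0 + b / s * f s)
      = (b / s + a / s) * (f 0 + f s) := by ring
  rw [h4, hsum, one_mul] at h3
  linarith

theorem strictConcave_subadditive_sparsifying (f : ℝ → ℝ)
    (heven : ∀ x : ℝ, f x = f |x|)
    (hconc : StrictConcaveOn ℝ (Set.Ici (0 : ℝ)) f)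
    (hsub : ∀ a b : ℝ, 0 ≤ a → 0 ≤ b → f (a + b) ≤ f a + f b)
    (n : ℕ) (x : Fin n → ℝ) (hx : ∀ i, 0 ≤ x i)
    (heq : ∑ i, f (x i) = f (∑ i, x i)) :
    ∀ i j, x i ≠ 0 → x j ≠ 0 → i = j := by
  intro i j hi hj
  by_contra hij
  have hxi : 0 < x i := (hx i).lt_of_ne (Ne.symm hi)
  have hxj : 0 < x j := (hx j).lt_of_ne (Ne.symm hj)
  set T : ℝ := ∑ k ∈ Finset.univ.erase i, x k with hT
  have hjmem : j ∈ Finset.univ.erase i := Finset.mem_erase.2 ⟨fun h => hij h.symm, Finset.mem_univ j⟩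
  have hTj : x j ≤ T := Finset.single_le_sum (fun k _ => hx k) hjmem
  have hTpos : 0 < T := lt_of_lt_of_le hxj hTj
  have hsplit : ∑ k, x k = x i + T := (Finset.add_sum_erase _ x (Finset.mem_univ i)).symm
  have hfsplit : ∑ k, f (x k) = f (x i) + ∑ k ∈ Finset.univ.erase i, f (x k) :=
    (Finset.add_sum_erase _ (fun k => f (x k)) (Finset.mem_univ i)).symm
  have h1 : f (x i + T) < f (x i) + f T :=
    aux_strict_superadd f hconc hsub hxi hTpos
  have h2 : f T ≤ ∑ k ∈ Finset.univ.erase i, f (x k) :=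
    aux_sum_subadd f hsub x hx _ ⟨j, hjmem⟩
  rw [hsplit, hfsplit] at heq
  linarith
end

section
/- For any complex m×n matrix M and 0 < p < 2, the entrywise ℓ_p-norm of M is at least the Schatten p-norm of M: (∑_{ij} |m_{ij}|^p)^{1/p} ≥ (∑_k σ_k(M)^p)^{1/p}, where σ_k(M) are the singular values of M. -/
open Finset Matrix

-- two-term subadditivity of rpow for 0 ≤ q ≤ 1, real version
lemma real_rpow_add_le {q : ℝ} (hq0 : 0 ≤ q) (hq1 : q ≤ 1) {a b : ℝ} (ha : 0 ≤ a) (hb : 0 ≤ b) :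
    (a + b) ^ q ≤ a ^ q + b ^ q := by
  have := NNReal.rpow_add_le_add_rpow ⟨a, ha⟩ ⟨b, hb⟩ hq0 hq1
  have h2 := NNReal.coe_le_coe.mpr this
  push_cast [NNReal.coe_rpow] at h2
  exact h2

lemma rpow_sum_le_sum_rpow {ι : Type*} (s : Finset ι) (f : ι → ℝ) (hf : ∀ i ∈ s, 0 ≤ f i)
    {q : ℝ} (hq0 : 0 < q) (hq1 : q ≤ 1) :
    (∑ i ∈ s, f i) ^ q ≤ ∑ i ∈ s, f i ^ q := by
  classical
  induction s using Finset.cons_induction with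
  | empty => simp [Real.zero_rpow hq0.ne']
  | cons a s ha ih =>
      rw [Finset.sum_cons, Finset.sum_cons]
      have h1 : 0 ≤ f a := hf a (Finset.mem_cons_self a s)
      have h2 : ∀ i ∈ s, 0 ≤ f i := fun i hi => hf i (Finset.mem_cons_of_mem hi)
      calc (f a + ∑ i ∈ s, f i) ^ q ≤ f a ^ q + (∑ i ∈ s, f i) ^ q :=
            real_rpow_add_le hq0.le hq1 h1 (Finset.sum_nonneg h2)
        _ ≤ f a ^ q + ∑ i ∈ s, f i ^ q := by gcongr; exact ih h2

lemma jensen_concave_rpow {ι : Type*} [Fintype ι] (w z : ι → ℝ) (hw : ∀ i, 0 ≤ w i)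
    (hw1 : ∑ i, w i = 1) (hz : ∀ i, 0 ≤ z i) {q : ℝ} (hq0 : 0 < q) (hq1 : q ≤ 1) :
    ∑ i, w i * z i ^ q ≤ (∑ i, w i * z i) ^ q := by
  have hinv : 1 ≤ 1 / q := (le_div_iff₀ hq0).mpr (by linarith)
  have h := Real.rpow_arith_mean_le_arith_mean_rpow Finset.univ w (fun i => z i ^ q)
    (fun i _ => hw i) hw1 (fun i _ => Real.rpow_nonneg (hz i) q) hinv
  have hz' : ∀ i, (z i ^ q) ^ (1/q) = z i := by
    intro i
    rw [← Real.rpow_mul (hz i), mul_one_div, div_self hq0.ne', Real.rpow_one]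
  rw [show (∑ i, w i * (z i ^ q) ^ (1/q)) = ∑ i, w i * z i from by simp_rw [hz']] at h
  have hS : 0 ≤ ∑ i, w i * z i ^ q :=
    Finset.sum_nonneg fun i _ => mul_nonneg (hw i) (Real.rpow_nonneg (hz i) q)
  have := Real.rpow_le_rpow (Real.rpow_nonneg hS (1/q)) h hq0.le
  rwa [← Real.rpow_mul hS, one_div_mul_cancel hq0.ne', Real.rpow_one] at this

noncomputable def singularValues {m n : ℕ} (M : Matrix (Fin m) (Fin n) ℂ) : Fin n → ℝ :=
  fun k => Real.sqrt ((Matrix.isHermitian_conjTranspose_mul_self M).eigenvalues k)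

theorem lp_ge_schatten {m n : ℕ} (M : Matrix (Fin m) (Fin n) ℂ)
    (p : ℝ) (hp0 : 0 < p) (hp2 : p < 2) :
    (∑ i, ∑ j, (‖M i j‖) ^ p) ^ ((1 : ℝ) / p) ≥
      (∑ k, (singularValues M k) ^ p) ^ ((1 : ℝ) / p) := by
  classical
  set hA := Matrix.isHermitian_conjTranspose_mul_self M with hA_def
  set lam := hA.eigenvalues with lam_def
  have hlam : ∀ j, 0 ≤ lam j := fun j =>
    Matrix.eigenvalues_conjTranspose_mul_self_nonneg M j
  set U : Matrix (Fin n) (Fin n) ℂ := (hA.eigenvectorUnitary : Matrix (Fin n) (Fin n) ℂ) with hU_def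
  set q : ℝ := p / 2 with hq_def
  have hq0 : 0 < q := by positivity
  have hq1 : q ≤ 1 := by rw [hq_def]; linarith
  -- weights
  set w : Fin n → Fin n → ℝ := fun k j => Complex.normSq (U k j) with hw_def
  have hw : ∀ k j, 0 ≤ w k j := fun k j => Complex.normSq_nonneg _
  have hUmem := (hA.eigenvectorUnitary).2
  have hrow : ∀ k, ∑ j, w k j = 1 := by
    intro k
    have h1 : U * star U = 1 := (Matrix.mem_unitaryGroup_iff).mp hUmem
    have h2 := congrArg (fun B => B k k) h1
    simp only [Matrix.mul_apply, Matrix.star_apply, Matrix.one_apply_eq] at h2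
    have h3 : ∑ j, ((w k j : ℝ) : ℂ) = 1 := by
      rw [← h2]
      exact Finset.sum_congr rfl fun j _ => (Complex.mul_conj (U k j)).symm
    exact_mod_cast h3
  have hcol : ∀ j, ∑ k, w k j = 1 := by
    intro j
    have h1 : star U * U = 1 := (Matrix.mem_unitaryGroup_iff').mp hUmem
    have h2 := congrArg (fun B => B j j) h1
    simp only [Matrix.mul_apply, Matrix.star_apply, Matrix.one_apply_eq] at h2
    have h3 : ∑ k, ((w k j : ℝ) : ℂ) = 1 := by
      rw [← h2]
      exact Finset.sum_congr rfl fun k _ => by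
        rw [mul_comm]; exact (Complex.mul_conj (U k j)).symm
    exact_mod_cast h3
  -- diagonal identity
  have hdiag : ∀ k, ∑ i, Complex.normSq (M i k) = ∑ j, w k j * lam j := by
    intro k
    have hs := hA.spectral_theorem
    have h2 : (Mᴴ * M) k k = ∑ x, U k x * ((lam x : ℝ) : ℂ) * star (U k x) := by
      rw [hs, Unitary.conjStarAlgAut_apply, Matrix.mul_apply]
      simp only [Matrix.mul_diagonal, Matrix.star_apply, Function.comp_apply]
      rfl
    have hC : ∑ i, ((Complex.normSq (M i k) : ℝ) : ℂ) = ∑ j, ((w k j * lam j : ℝ) : ℂ) := by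
      calc ∑ i, ((Complex.normSq (M i k) : ℝ) : ℂ)
          = ∑ i, Mᴴ k i * M i k := Finset.sum_congr rfl fun i _ => by
            rw [Matrix.conjTranspose_apply, mul_comm]
            exact (Complex.mul_conj (M i k)).symm
        _ = (Mᴴ * M) k k := (Matrix.mul_apply).symm
        _ = ∑ x, U k x * ((lam x : ℝ) : ℂ) * star (U k x) := h2
        _ = ∑ j, ((w k j * lam j : ℝ) : ℂ) := Finset.sum_congr rfl fun x _ => by
            push_cast
            rw [mul_right_comm]
            exact congrArg (· * ((lam x : ℝ) : ℂ)) (Complex.mul_conj (U k x))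
    exact_mod_cast hC
  -- main chain
  have key : ∑ k, (singularValues M k) ^ p ≤ ∑ i, ∑ j, (‖M i j‖) ^ p := by
    have step1 : ∑ k, (singularValues M k) ^ p = ∑ j, lam j ^ q := by
      apply Finset.sum_congr rfl; intro j _
      rw [singularValues, Real.sqrt_eq_rpow, ← Real.rpow_mul (hlam j),
        show (1:ℝ)/2*p = q by rw [hq_def]; ring]
    have step2 : ∑ j, lam j ^ q = ∑ k, ∑ j, w k j * lam j ^ q := by
      rw [Finset.sum_comm]
      apply Finset.sum_congr rfl; intro j _
      rw [← Finset.sum_mul, hcol j, one_mul]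
    have step3 : ∀ k, ∑ j, w k j * lam j ^ q ≤ (∑ i, Complex.normSq (M i k)) ^ q := by
      intro k
      rw [hdiag k]
      exact jensen_concave_rpow (w k) lam (hw k) (hrow k) hlam hq0 hq1
    have step4 : ∀ k, (∑ i, Complex.normSq (M i k)) ^ q ≤ ∑ i, (‖M i k‖) ^ p := by
      intro k
      calc (∑ i, Complex.normSq (M i k)) ^ q
          ≤ ∑ i, (Complex.normSq (M i k)) ^ q :=
            rpow_sum_le_sum_rpow _ _ (fun i _ => Complex.normSq_nonneg _) hq0 hq1
        _ = ∑ i, (‖M i k‖) ^ p := by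
            apply Finset.sum_congr rfl; intro i _
            rw [Complex.normSq_eq_norm_sq, ← Real.rpow_natCast,
              ← Real.rpow_mul (norm_nonneg _),
              show (2:ℕ)*q = p by push_cast [hq_def]; ring]
    calc ∑ k, (singularValues M k) ^ p = ∑ k, ∑ j, w k j * lam j ^ q := by rw [step1, step2]
      _ ≤ ∑ k, ∑ i, (‖M i k‖) ^ p :=
          Finset.sum_le_sum fun k _ => (step3 k).trans (step4 k)
      _ = ∑ i, ∑ k, (‖M i k‖) ^ p := Finset.sum_comm
  have hLnn : 0 ≤ ∑ k, (singularValues M k) ^ p :=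
    Finset.sum_nonneg fun k _ => Real.rpow_nonneg (Real.sqrt_nonneg _) p
  exact Real.rpow_le_rpow hLnn key (by positivity)
end

section
/- For any complex m×n matrix M and p > 2, the entrywise ℓ_p-norm of M is at most the Schatten p-norm of M: (∑_{ij} |m_{ij}|^p)^{1/p} ≤ (∑_k σ_k(M)^p)^{1/p}. -/
open Finset Matrix

lemma sum_rpow_le_rpow_sum' {ι : Type*} (s : Finset ι) (f : ι → ℝ) (hf : ∀ i ∈ s, 0 ≤ f i)
    {q : ℝ} (hq : 1 ≤ q) : ∑ i ∈ s, f i ^ q ≤ (∑ i ∈ s, f i) ^ q := by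
  have hq0 : q ≠ 0 := by linarith
  have hS : 0 ≤ ∑ i ∈ s, f i := Finset.sum_nonneg hf
  calc ∑ i ∈ s, f i ^ q ≤ ∑ i ∈ s, f i * (∑ i ∈ s, f i) ^ (q - 1) := by
        refine Finset.sum_le_sum fun i hi => ?_
        have h1 : f i ^ q = f i ^ (1 + (q - 1)) := by ring_nf
        rw [h1, Real.rpow_add' (hf i hi) (by simpa using hq0), Real.rpow_one]
        exact mul_le_mul_of_nonneg_left
          (Real.rpow_le_rpow (hf i hi) (Finset.single_le_sum hf hi) (by linarith))
          (hf i hi)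
    _ = (∑ i ∈ s, f i) ^ q := by
        rw [← Finset.sum_mul]
        nth_rewrite 1 [← Real.rpow_one (∑ i ∈ s, f i)]
        rw [← Real.rpow_add' hS (by simpa using hq0)]
        ring_nf

lemma diag_eq_sum_eigen {n : ℕ} (A : Matrix (Fin n) (Fin n) ℂ) (hA : A.IsHermitian) (j : Fin n) :
    A j j = ((∑ k, ‖(hA.eigenvectorUnitary : Matrix (Fin n) (Fin n) ℂ) j k‖ ^ 2
      * hA.eigenvalues k : ℝ) : ℂ) := by
  have hst := hA.spectral_theorem
  rw [Unitary.conjStarAlgAut_apply, Matrix.mul_assoc] at hst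
  have h := congrFun (congrFun hst j) j
  rw [h]
  simp only [Matrix.mul_apply, Matrix.diagonal_apply, Matrix.star_apply,
    Function.comp_apply, ite_mul, zero_mul, Finset.sum_ite_eq, Finset.mem_univ, if_true]
  push_cast
  refine Finset.sum_congr rfl fun k _ => ?_
  rw [RCLike.star_def]
  have hre : ∀ z w : ℂ, z * (w * (starRingEnd ℂ) z) = w * (z * (starRingEnd ℂ) z) := by
    intros; ring
  rw [hre, Complex.mul_conj, Complex.normSq_eq_norm_sq]
  norm_cast
  rw [mul_comm]
  exact (Complex.ofReal_mul _ _).symm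

lemma star_mul_self_abs (z : ℂ) : star z * z = ((‖z‖ ^ 2 : ℝ) : ℂ) := by
  rw [RCLike.star_def, mul_comm, Complex.mul_conj, Complex.normSq_eq_norm_sq]

theorem lp_le_schatten {m n : ℕ} (M : Matrix (Fin m) (Fin n) ℂ)
    (p : ℝ) (hp : 2 < p) :
    (∑ i, ∑ j, ‖M i j‖ ^ p) ^ ((1 : ℝ) / p) ≤
      (∑ k, (singularValues M k) ^ p) ^ ((1 : ℝ) / p) := by
  set q := p / 2 with hqdef
  have hq1 : 1 ≤ q := by rw [hqdef]; linarith
  have hp0 : 0 < p := by linarith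
  have hA := Matrix.isHermitian_conjTranspose_mul_self M
  set lam := hA.eigenvalues with hlam
  have hlam0 : ∀ k, 0 ≤ lam k := fun k =>
    Matrix.eigenvalues_conjTranspose_mul_self_nonneg M k
  set U : Matrix (Fin n) (Fin n) ℂ := (hA.eigenvectorUnitary : Matrix (Fin n) (Fin n) ℂ) with hU
  set w : Fin n → Fin n → ℝ := fun j k => ‖U j k‖ ^ 2 with hw
  have hU1 : U * star U = 1 := (Matrix.mem_unitaryGroup_iff).mp hA.eigenvectorUnitary.2
  have hU2 : star U * U = 1 := (Matrix.mem_unitaryGroup_iff').mp hA.eigenvectorUnitary.2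
  have hrow : ∀ j, ∑ k, w j k = 1 := by
    intro j
    have h := congrFun (congrFun hU1 j) j
    simp only [Matrix.mul_apply, Matrix.star_apply, Matrix.one_apply_eq] at h
    have h2 : ∀ k, U j k * star (U j k) = ((w j k : ℝ) : ℂ) := by
      intro k
      rw [mul_comm]
      exact star_mul_self_abs (U j k)
    rw [Finset.sum_congr rfl fun k _ => h2 k, ← Complex.ofReal_sum] at h
    exact_mod_cast h
  have hcol : ∀ k, ∑ j, w j k = 1 := by
    intro k
    have h := congrFun (congrFun hU2 k) k
    simp only [Matrix.mul_apply, Matrix.star_apply, Matrix.one_apply_eq] at h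
    rw [Finset.sum_congr rfl fun j _ => star_mul_self_abs (U j k), ← Complex.ofReal_sum] at h
    exact_mod_cast h
  have key : ∀ j, ∑ i, ‖M i j‖ ^ 2 = ∑ k, w j k * lam k := by
    intro j
    have h1 : (Mᴴ * M) j j = ((∑ i, ‖M i j‖ ^ 2 : ℝ) : ℂ) := by
      rw [Matrix.mul_apply, Complex.ofReal_sum]
      refine Finset.sum_congr rfl fun i _ => ?_
      rw [Matrix.conjTranspose_apply]
      exact star_mul_self_abs (M i j)
    have h2 := diag_eq_sum_eigen (Mᴴ * M) hA j
    rw [h1] at h2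
    exact_mod_cast h2
  have hsig : ∀ k, singularValues M k ^ p = lam k ^ q := by
    intro k
    show Real.sqrt (lam k) ^ p = lam k ^ q
    rw [Real.sqrt_eq_rpow, ← Real.rpow_mul (hlam0 k)]
    congr 1
    rw [hqdef]; ring
  have habs : ∀ z : ℂ, ‖z‖ ^ p = ((‖z‖) ^ 2 : ℝ) ^ q := by
    intro z
    rw [← Real.rpow_natCast (‖z‖) 2, ← Real.rpow_mul (norm_nonneg _)]
    congr 1
    push_cast; rw [hqdef]; ring
  have main : ∑ i, ∑ j, ‖M i j‖ ^ p ≤ ∑ k, singularValues M k ^ p := by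
    calc ∑ i, ∑ j, ‖M i j‖ ^ p
        = ∑ j, ∑ i, (‖M i j‖ ^ 2 : ℝ) ^ q := by
          rw [Finset.sum_comm]
          exact Finset.sum_congr rfl fun j _ => Finset.sum_congr rfl fun i _ => habs _
      _ ≤ ∑ j, (∑ i, ‖M i j‖ ^ 2) ^ q := by
          refine Finset.sum_le_sum fun j _ => ?_
          exact sum_rpow_le_rpow_sum' _ _ (fun i _ => by positivity) hq1
      _ = ∑ j, (∑ k, w j k * lam k) ^ q :=
          Finset.sum_congr rfl fun j _ => by rw [key j]
      _ ≤ ∑ j, ∑ k, w j k * lam k ^ q := by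
          refine Finset.sum_le_sum fun j _ => ?_
          exact Real.rpow_arith_mean_le_arith_mean_rpow Finset.univ (w j) lam
            (fun k _ => by positivity) (hrow j) (fun k _ => hlam0 k) hq1
      _ = ∑ k, (∑ j, w j k) * lam k ^ q := by
          rw [Finset.sum_comm]
          exact Finset.sum_congr rfl fun k _ => (Finset.sum_mul _ _ _).symm
      _ = ∑ k, lam k ^ q := by simp only [hcol, one_mul]
      _ = ∑ k, singularValues M k ^ p :=
          Finset.sum_congr rfl fun k _ => (hsig k).symm
  exact Real.rpow_le_rpow
    (Finset.sum_nonneg fun i _ => Finset.sum_nonneg fun j _ =>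
      Real.rpow_nonneg (norm_nonneg _) p)
    main (by positivity)
end

section
/- Let M ∈ ℝ^{n×d} be a matrix whose rows are the vertices of an axis-aligned hypercube centered at the origin (so that the convex hull of the rows of M is [−c, c]^d with c = ‖M‖_∞). Then for any G ∈ ℝ^{d×d} with det(G) = 1, ‖M G‖_∞ ≥ ‖M‖_∞, where ‖X‖_∞ = max_{ij} |x_{ij}|. -/
open MeasureTheory Set

theorem hypercube_linfty_optimal {n d : ℕ} (hn : 0 < n) (hd : 0 < d)
    (M : Matrix (Fin n) (Fin d) ℝ) (c : ℝ)
    (hc : c = ⨆ p : Fin n × Fin d, |M p.1 p.2|)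
    (hcube : convexHull ℝ (Set.range fun i => M i) = {x : Fin d → ℝ | ∀ j, |x j| ≤ c})
    (G : Matrix (Fin d) (Fin d) ℝ) (hG : G.det = 1) :
    (⨆ p : Fin n × Fin d, |(M * G) p.1 p.2|) ≥ ⨆ p : Fin n × Fin d, |M p.1 p.2| := by
  have : Nonempty (Fin n × Fin d) := ⟨⟨⟨0, hn⟩, ⟨0, hd⟩⟩⟩
  set c' : ℝ := ⨆ p : Fin n × Fin d, |(M * G) p.1 p.2| with hc'
  rw [← hc]
  -- c' ≥ 0
  have hc'0 : 0 ≤ c' := le_ciSup_of_le (Set.Finite.bddAbove (Set.finite_range _))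
    (Classical.arbitrary _) (abs_nonneg _)
  rcases le_or_gt c c' with h | h
  · exact h
  exfalso
  have hcpos : 0 < c := lt_of_le_of_lt hc'0 h
  -- cube sets
  have cube_eq : ∀ a : ℝ, {x : Fin d → ℝ | ∀ j, |x j| ≤ a}
      = Set.pi Set.univ (fun _ : Fin d => Icc (-a) a) := by
    intro a
    ext x
    simp [abs_le, Set.mem_pi, Pi.le_def, forall_and]
  have vol_cube : ∀ a : ℝ, volume {x : Fin d → ℝ | ∀ j, |x j| ≤ a}
      = (ENNReal.ofReal (2 * a)) ^ d := by
    intro a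
    rw [cube_eq, volume_pi_pi]
    simp [Real.volume_Icc, two_mul, sub_neg_eq_add]
  -- linear map f x = Gᵀ.mulVec x
  set f : (Fin d → ℝ) →ₗ[ℝ] (Fin d → ℝ) := Matrix.toLin' G.transpose with hf
  have hdetf : LinearMap.det f = 1 := by
    rw [hf, LinearMap.det_toLin', Matrix.det_transpose, hG]
  have hrow : ∀ i, f (M i) = (M * G) i := by
    intro i
    ext j
    simp [hf, Matrix.toLin'_apply, Matrix.mulVec, Matrix.mul_apply, dotProduct,
      Matrix.transpose_apply, mul_comm]
  -- image of hull
  have himg : f '' (convexHull ℝ (Set.range fun i => M i))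
      = convexHull ℝ (Set.range fun i => (M * G) i) := by
    have heq : (fun i => (M * G) i) = f ∘ (fun i => M i) := funext fun i => (hrow i).symm
    rw [heq, Set.range_comp, f.image_convexHull]
  -- hull MG ⊆ cube c'
  have hsub : convexHull ℝ (Set.range fun i => (M * G) i)
      ⊆ {x : Fin d → ℝ | ∀ j, |x j| ≤ c'} := by
    apply convexHull_min
    · rintro x ⟨i, rfl⟩ j
      exact le_ciSup_of_le (Set.Finite.bddAbove (Set.finite_range _)) (i, j) le_rfl
    · rw [cube_eq]
      exact convex_pi fun i _ => convex_Icc _ _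
  -- volume comparison
  have hvol : volume (convexHull ℝ (Set.range fun i => (M * G) i))
      = (ENNReal.ofReal (2 * c)) ^ d := by
    rw [← himg, Measure.addHaar_image_linearMap, hdetf, hcube, vol_cube]
    simp
  have hle : (ENNReal.ofReal (2 * c)) ^ d ≤ (ENNReal.ofReal (2 * c')) ^ d := by
    rw [← hvol, ← vol_cube]
    exact measure_mono hsub
  have hlt : (ENNReal.ofReal (2 * c')) ^ d < (ENNReal.ofReal (2 * c)) ^ d := by
    apply ENNReal.pow_lt_pow_left hd.ne'
    rw [ENNReal.ofReal_lt_ofReal_iff (by linarith)]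
    linarith
  exact absurd hle hlt.not_ge
end
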